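/- arXiv:1609.08530 — 3 statements merged into one kernel-verified Lean document; each statement's English description precedes it below -/
import Mathlib

section
/- (Generalized Cauchy–Vandermonde determinant, absolute value form) Let 0 ≤ k ≤ l = n−k with k ≤ l, let z₁,…,z_k and w₁,…,w_l be real numbers with all z_i distinct, all w_j distinct, and z_i ≠ w_j. Let D be the l×l matrix with D_{ij} = w_j^{i−1} for 1 ≤ i ≤ l−k and D_{ij} = 1/(z_{i−l+k} − w_j) for l−k < i ≤ l. Then |det D| = ∏_{1≤i<j≤k}|z_i−z_j| · ∏_{1≤i<j≤l}|w_i−w_j| · ∏_{1≤i≤k,1≤j≤l}|z_i−w_j|^{−1}. -/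
open Finset Polynomial


section helpers
variable {M : Type*} [CommMonoid M]

lemma prod_Ioi_ite {n : ℕ} (i : Fin n) (h : Fin n → M) :
    ∏ j ∈ Ioi i, h j = ∏ j, if i < j then h j else 1 := by
  rw [← Finset.prod_filter, Finset.filter_lt_eq_Ioi]

lemma prod_Iio_swap {n : ℕ} (f : Fin n → Fin n → M) :
    ∏ i, ∏ j ∈ Iio i, f i j = ∏ i, ∏ j ∈ Ioi i, f j i := by
  have h1 : ∀ i : Fin n, ∏ j ∈ Iio i, f i j = ∏ j, if j < i then f i j else 1 := by
    intro i; rw [← Finset.prod_filter, Finset.filter_gt_eq_Iio]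
  simp_rw [h1, prod_Ioi_ite]
  exact Finset.prod_comm

lemma erase_eq_Iio_union_Ioi {n : ℕ} (a : Fin n) :
    univ.erase a = Iio a ∪ Ioi a := by
  ext t
  simp only [mem_erase, mem_union, mem_Iio, mem_Ioi, mem_univ, and_true]
  constructor
  · exact fun h => lt_or_gt_of_ne h
  · rintro (h | h)
    exacts [ne_of_lt h, ne_of_gt h]

lemma prod_erase_eq_sq {n : ℕ} (v : Fin n → ℝ) :
    ∏ a, ∏ t ∈ univ.erase a, |v t - v a|
      = (∏ i, ∏ j ∈ Ioi i, |v i - v j|) * ∏ i, ∏ j ∈ Ioi i, |v i - v j| := by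
  have h1 : ∀ a : Fin n, ∏ t ∈ univ.erase a, |v t - v a|
      = (∏ t ∈ Iio a, |v t - v a|) * ∏ t ∈ Ioi a, |v t - v a| := by
    intro a
    rw [erase_eq_Iio_union_Ioi, Finset.prod_union (Finset.disjoint_Ioi_Iio a).symm]
  simp_rw [h1, Finset.prod_mul_distrib]
  congr 1
  · rw [prod_Iio_swap (fun a t => |v t - v a|)]
  · apply Finset.prod_congr rfl; intro a _
    apply Finset.prod_congr rfl; intro t _
    exact abs_sub_comm _ _
end helpers

lemma pairProd_append {m k : ℕ} {M : Type*} [CommMonoid M] (g : ℝ → ℝ → M)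
    (u : Fin m → ℝ) (s : Fin k → ℝ) :
    (∏ i, ∏ j ∈ Ioi i, g (Fin.append u s i) (Fin.append u s j)) =
      ((∏ i, ∏ j ∈ Ioi i, g (u i) (u j)) * ∏ i, ∏ j ∈ Ioi i, g (s i) (s j))
        * ∏ a, ∏ b, g (u a) (s b) := by
  have key : ∀ (G : Fin (m + k) → Fin (m + k) → M),
      (∏ i, ∏ j ∈ Ioi i, G i j) =
        ((∏ a, ∏ b ∈ Ioi a, G (Fin.castAdd k a) (Fin.castAdd k b)) *
          ∏ a, ∏ b ∈ Ioi a, G (Fin.natAdd m a) (Fin.natAdd m b)) *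
          ∏ a : Fin m, ∏ b : Fin k, G (Fin.castAdd k a) (Fin.natAdd m b) := by
    intro G
    simp_rw [prod_Ioi_ite]
    rw [Fin.prod_univ_add]
    have h1 : ∀ a : Fin m, (∏ j : Fin (m+k), if Fin.castAdd k a < j then G (Fin.castAdd k a) j else 1)
        = (∏ b : Fin m, if a < b then G (Fin.castAdd k a) (Fin.castAdd k b) else 1) *
          ∏ b : Fin k, G (Fin.castAdd k a) (Fin.natAdd m b) := by
      intro a
      rw [Fin.prod_univ_add]
      have e1 : (∏ b : Fin m, if Fin.castAdd k a < Fin.castAdd k b then G (Fin.castAdd k a) (Fin.castAdd k b) else 1)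
          = ∏ b : Fin m, if a < b then G (Fin.castAdd k a) (Fin.castAdd k b) else 1 := by
        apply Finset.prod_congr rfl; intro b _
        have : Fin.castAdd k a < Fin.castAdd k b ↔ a < b := by
          simp only [Fin.lt_def, Fin.coe_castAdd]
        rw [if_congr this rfl rfl]
      have e2 : (∏ b : Fin k, if Fin.castAdd k a < Fin.natAdd m b then G (Fin.castAdd k a) (Fin.natAdd m b) else 1)
          = ∏ b : Fin k, G (Fin.castAdd k a) (Fin.natAdd m b) := by
        apply Finset.prod_congr rfl; intro b _
        have hc : Fin.castAdd k a < Fin.natAdd m b := by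
          simp only [Fin.lt_def, Fin.coe_castAdd, Fin.coe_natAdd]
          have := a.isLt; omega
        rw [if_pos hc]
      rw [e1, e2]
    have h2 : ∀ a : Fin k, (∏ j : Fin (m+k), if Fin.natAdd m a < j then G (Fin.natAdd m a) j else 1)
        = ∏ b : Fin k, if a < b then G (Fin.natAdd m a) (Fin.natAdd m b) else 1 := by
      intro a
      rw [Fin.prod_univ_add]
      have : (∏ b : Fin m, if Fin.natAdd m a < Fin.castAdd k b then G (Fin.natAdd m a) (Fin.castAdd k b) else 1) = 1 := by
        apply Finset.prod_eq_one; intro b _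
        have hc : ¬ Fin.natAdd m a < Fin.castAdd k b := by
          simp only [Fin.lt_def, Fin.coe_castAdd, Fin.coe_natAdd]
          have := b.isLt; omega
        rw [if_neg hc]
      rw [this, one_mul]
      apply Finset.prod_congr rfl; intro b _
      have : Fin.natAdd m a < Fin.natAdd m b ↔ a < b := by
        simp only [Fin.lt_def, Fin.coe_natAdd]; omega
      rw [if_congr this rfl rfl]
    simp_rw [h1, h2, Finset.prod_mul_distrib]
    exact mul_right_comm _ _ _
  rw [key (fun i j => g (Fin.append u s i) (Fin.append u s j))]
  simp only [Fin.append_left, Fin.append_right]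

lemma det_eval_eq {n : ℕ} (x : Fin n → ℝ) (Q : Fin n → ℝ[X]) (hQ : ∀ q, (Q q).natDegree < n) :
    Matrix.det (Matrix.of fun p q => (Q q).eval (x p)) =
      (Matrix.vandermonde x).det *
        Matrix.det (Matrix.of fun r q : Fin n => (Q q).coeff (r : ℕ)) := by
  rw [← Matrix.det_mul]
  congr 1
  ext i j
  rw [Matrix.mul_apply, Matrix.of_apply,
    Polynomial.eval_eq_sum_range' (hQ j), ← Fin.sum_univ_eq_sum_range]
  apply Finset.sum_congr rfl
  intro r _
  simp [Matrix.vandermonde, mul_comm]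

theorem cv_aux (k m : ℕ) (z : Fin k → ℝ) (w : Fin (m + k) → ℝ)
    (hz : Function.Injective z) (hw : Function.Injective w)
    (hzw : ∀ i j, z i ≠ w j) :
    |Matrix.det (Matrix.of fun i j : Fin (m + k) =>
        if h : (i : ℕ) < m then (w j) ^ (i : ℕ)
        else (z ⟨(i : ℕ) - m, by have := i.isLt; omega⟩ - w j)⁻¹)|
      = (∏ i : Fin k, ∏ j ∈ Finset.Ioi i, |z i - z j|)
        * (∏ i : Fin (m + k), ∏ j ∈ Finset.Ioi i, |w i - w j|)
        * ∏ i : Fin k, ∏ j : Fin (m + k), |z i - w j|⁻¹ := by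
  -- notation
  set D : Matrix (Fin (m+k)) (Fin (m+k)) ℝ := Matrix.of fun i j : Fin (m + k) =>
        if h : (i : ℕ) < m then (w j) ^ (i : ℕ)
        else (z ⟨(i : ℕ) - m, by have := i.isLt; omega⟩ - w j)⁻¹ with hD
  set P : ℝ[X] := ∏ t, (C (z t) - X) with hP
  set Q : Fin (m+k) → ℝ[X] := fun q =>
    if h : (q : ℕ) < m then X ^ (q : ℕ) * P
    else ∏ t ∈ univ.erase (⟨(q : ℕ) - m, by have := q.isLt; omega⟩ : Fin k), (C (z t) - X) with hQ
  set y : Fin m → ℝ := fun a => 1 + (∑ t, |z t|) + a with hy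
  set xc : Fin (m+k) → ℝ := Fin.append y z with hxc
  have hPeval : ∀ v : ℝ, P.eval v = ∏ t, (z t - v) := by
    intro v; simp [hP, eval_prod]
  have hCeval : ∀ (t0 : Fin k) (v : ℝ),
      (∏ t ∈ univ.erase t0, (C (z t) - X)).eval v = ∏ t ∈ univ.erase t0, (z t - v) := by
    intro t0 v; simp [eval_prod]
  have hlin : ∀ a : ℝ, (C a - X).natDegree = 1 := by
    intro a
    rw [show C a - X = -(X - C a) by ring, Polynomial.natDegree_neg,
      Polynomial.natDegree_X_sub_C]
  have hPdeg : P.natDegree ≤ k := by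
    refine le_trans (Polynomial.natDegree_prod_le _ _) ?_
    refine le_trans (Finset.sum_le_sum (fun t _ => le_of_eq (hlin (z t)))) (by simp)
  have hQdeg : ∀ q, (Q q).natDegree < m + k := by
    intro q
    simp only [hQ]
    by_cases h : (q : ℕ) < m
    · rw [dif_pos h]
      calc (X ^ (q:ℕ) * P).natDegree ≤ (X ^ (q:ℕ) : ℝ[X]).natDegree + P.natDegree :=
            Polynomial.natDegree_mul_le
        _ ≤ (q : ℕ) + k := by rw [Polynomial.natDegree_X_pow]; exact Nat.add_le_add_left hPdeg _
        _ < m + k := by omega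
    · rw [dif_neg h]
      have hk : 0 < k := by have := q.isLt; omega
      refine lt_of_le_of_lt (Polynomial.natDegree_prod_le _ _) ?_
      refine lt_of_le_of_lt (Finset.sum_le_sum (fun t _ => le_of_eq (hlin (z t)))) ?_
      simp only [Finset.sum_const, smul_eq_mul, mul_one]
      rw [Finset.card_erase_of_mem (mem_univ _), Finset.card_univ, Fintype.card_fin]
      omega
  have hzy : ∀ (t : Fin k) (a : Fin m), z t < y a := by
    intro t a
    have h1 : z t ≤ |z t| := le_abs_self _
    have h2 : |z t| ≤ ∑ t, |z t| := Finset.single_le_sum (fun t _ => abs_nonneg (z t)) (mem_univ t)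
    have h3 : (0:ℝ) ≤ (a:ℝ) := by positivity
    rw [hy]; dsimp only; linarith
  have hyinj : Function.Injective y := by
    intro a b hab
    rw [hy] at hab; dsimp only at hab
    have : (a : ℝ) = b := by linarith
    exact Fin.ext (by exact_mod_cast this)
  have hxcl : ∀ a : Fin m, xc (Fin.castAdd k a) = y a := fun a => Fin.append_left y z a
  have hxcr : ∀ a : Fin k, xc (Fin.natAdd m a) = z a := fun a => Fin.append_right y z a
  have hxcinj : Function.Injective xc := by
    intro i j hij
    induction i using Fin.addCases with
    | left a =>
      induction j using Fin.addCases with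
      | left b =>
        rw [hxcl, hxcl] at hij
        exact congrArg _ (hyinj hij)
      | right b =>
        rw [hxcl, hxcr] at hij
        exact absurd hij.symm (ne_of_lt (hzy b a))
    | right a =>
      induction j using Fin.addCases with
      | left b =>
        rw [hxcr, hxcl] at hij
        exact absurd hij (ne_of_lt (hzy a b))
      | right b =>
        rw [hxcr, hxcr] at hij
        exact congrArg _ (hz hij)
  -- branch values of Q
  have hQl : ∀ b : Fin m, Q (Fin.castAdd k b) = X ^ (b : ℕ) * P := by
    intro b
    simp only [hQ]
    rw [dif_pos (by simpa using b.isLt)]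
    simp
  have hQr : ∀ b : Fin k, Q (Fin.natAdd m b) = ∏ t ∈ univ.erase b, (C (z t) - X) := by
    intro b
    simp only [hQ]
    rw [dif_neg (by simp)]
    have hidx : (⟨((Fin.natAdd m b : Fin (m+k)) : ℕ) - m, by have := b.isLt; simp only [Fin.coe_natAdd]; omega⟩ : Fin k) = b := by
      apply Fin.ext; simp
    rw [hidx]
  -- nonvanishing of column scalars
  have hcne : ∀ p, P.eval (w p) ≠ 0 := by
    intro p
    rw [hPeval]
    exact Finset.prod_ne_zero_iff.mpr (fun t _ => sub_ne_zero.mpr (hzw t p))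
  -- E1 : eval matrix at w = column-scaled D-transpose
  have E1 : Matrix.det (Matrix.of fun p q : Fin (m+k) => (Q q).eval (w p))
      = (∏ p, P.eval (w p)) * D.det := by
    have hM : (Matrix.of fun p q : Fin (m+k) => (Q q).eval (w p))
        = Matrix.of (fun p q => P.eval (w p) * D.transpose p q) := by
      ext p q
      simp only [Matrix.of_apply, Matrix.transpose_apply, hQ, hD]
      by_cases h : (q : ℕ) < m
      · rw [dif_pos h, dif_pos h, Polynomial.eval_mul, Polynomial.eval_pow, Polynomial.eval_X]
        ring
      · rw [dif_neg h, dif_neg h, hCeval, hPeval]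
        have key : ∀ t0 : Fin k, (∏ t ∈ univ.erase t0, (z t - w p))
            = (∏ t, (z t - w p)) * (z t0 - w p)⁻¹ := by
          intro t0
          rw [← Finset.mul_prod_erase univ _ (mem_univ t0), mul_comm (z t0 - w p),
            mul_assoc, mul_inv_cancel₀ (sub_ne_zero.mpr (hzw t0 p)), mul_one]
        exact key _
    rw [hM, Matrix.det_mul_column (fun p => P.eval (w p)) D.transpose, Matrix.det_transpose]
  -- E2 : eval matrix at xc is block triangular
  have E2 : Matrix.det (Matrix.of fun p q : Fin (m+k) => (Q q).eval (xc p))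
      = ((∏ a, P.eval (y a)) * (Matrix.vandermonde y).det)
        * ∏ a : Fin k, ∏ t ∈ univ.erase a, (z t - z a) := by
    have hsub : (Matrix.of fun p q : Fin (m+k) => (Q q).eval (xc p)).submatrix
          (finSumFinEquiv : Fin m ⊕ Fin k ≃ Fin (m+k)) finSumFinEquiv
        = Matrix.fromBlocks
            (Matrix.of fun a b : Fin m => P.eval (y a) * Matrix.vandermonde y a b)
            (Matrix.of fun (a : Fin m) (b : Fin k) => ∏ t ∈ univ.erase b, (z t - y a))
            0
            (Matrix.diagonal fun a : Fin k => ∏ t ∈ univ.erase a, (z t - z a)) := by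
      ext p q
      cases p with
      | inl a =>
        cases q with
        | inl b =>
          simp only [Matrix.submatrix_apply, finSumFinEquiv_apply_left, Matrix.of_apply,
            Matrix.fromBlocks_apply₁₁, hQl, hxcl]
          rw [Polynomial.eval_mul, Polynomial.eval_pow, Polynomial.eval_X]
          rw [Matrix.vandermonde_apply]
          ring
        | inr b =>
          simp only [Matrix.submatrix_apply, finSumFinEquiv_apply_left,
            finSumFinEquiv_apply_right, Matrix.of_apply, Matrix.fromBlocks_apply₁₂, hQr, hxcl]
          rw [hCeval]
      | inr a =>
        cases q with
        | inl b =>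
          simp only [Matrix.submatrix_apply, finSumFinEquiv_apply_left,
            finSumFinEquiv_apply_right, Matrix.of_apply, Matrix.fromBlocks_apply₂₁, hQl, hxcr]
          rw [Polynomial.eval_mul]
          rw [hPeval]
          rw [Finset.prod_eq_zero (mem_univ a) (sub_self (z a))]
          simp
        | inr b =>
          simp only [Matrix.submatrix_apply, finSumFinEquiv_apply_right, Matrix.of_apply,
            Matrix.fromBlocks_apply₂₂, hQr, hxcr]
          rw [hCeval]
          by_cases hab : a = b
          · subst hab
            rw [Matrix.diagonal_apply_eq]
          · rw [Matrix.diagonal_apply_ne _ hab]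
            exact Finset.prod_eq_zero (Finset.mem_erase.mpr ⟨hab, mem_univ a⟩) (sub_self (z a))
    rw [← Matrix.det_submatrix_equiv_self (finSumFinEquiv : Fin m ⊕ Fin k ≃ Fin (m+k)), hsub,
      Matrix.det_fromBlocks_zero₂₁, Matrix.det_diagonal,
      Matrix.det_mul_column (fun a => P.eval (y a)) (Matrix.vandermonde y)]
  -- the two applications of the factorization lemma
  have eq1 := det_eval_eq w Q hQdeg
  have eq2 := det_eval_eq xc Q hQdeg
  set Mdet := Matrix.det (Matrix.of fun r q : Fin (m+k) => (Q q).coeff (r : ℕ)) with hMdet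
  rw [E1] at eq1
  rw [E2] at eq2
  set E2val := ((∏ a, P.eval (y a)) * (Matrix.vandermonde y).det)
        * ∏ a : Fin k, ∏ t ∈ univ.erase a, (z t - z a) with hE2val
  have hvxc : (Matrix.vandermonde xc).det ≠ 0 := Matrix.det_vandermonde_ne_zero_iff.mpr hxcinj
  have hcprod : (∏ p, P.eval (w p)) ≠ 0 := Finset.prod_ne_zero_iff.mpr (fun p _ => hcne p)
  have key : D.det * ((∏ p, P.eval (w p)) * (Matrix.vandermonde xc).det)
      = (Matrix.vandermonde w).det * E2val := by
    linear_combination (Matrix.vandermonde xc).det * eq1 - (Matrix.vandermonde w).det * eq2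
  have hDdet : D.det = ((Matrix.vandermonde w).det * E2val)
      / ((∏ p, P.eval (w p)) * (Matrix.vandermonde xc).det) :=
    (eq_div_iff (mul_ne_zero hcprod hvxc)).mpr key
  -- absolute values
  have absVdm : ∀ {n : ℕ} (v : Fin n → ℝ),
      |(Matrix.vandermonde v).det| = ∏ i, ∏ j ∈ Ioi i, |v i - v j| := by
    intro n v
    rw [Matrix.det_vandermonde, Finset.abs_prod]
    refine Finset.prod_congr rfl (fun i _ => ?_)
    rw [Finset.abs_prod]
    exact Finset.prod_congr rfl (fun j _ => abs_sub_comm _ _)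
  -- abbreviations for the absolute-value products
  set Tz := ∏ i : Fin k, ∏ j ∈ Ioi i, |z i - z j| with hTz
  set Tw := ∏ i : Fin (m+k), ∏ j ∈ Ioi i, |w i - w j| with hTw
  set Ty := ∏ i : Fin m, ∏ j ∈ Ioi i, |y i - y j| with hTy
  set Azy := ∏ a : Fin m, ∏ b : Fin k, |y a - z b| with hAzy
  set Czw := ∏ i : Fin k, ∏ j : Fin (m+k), |z i - w j| with hCzw
  -- expansions
  have habsxc : |(Matrix.vandermonde xc).det| = (Ty * Tz) * Azy := by
    rw [absVdm xc, hxc]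
    exact pairProd_append (fun a b => |a - b|) y z
  have habsE2 : |E2val| = (Azy * Ty) * (Tz * Tz) := by
    rw [hE2val, abs_mul, abs_mul, absVdm y, Finset.abs_prod]
    have h1 : (∏ a, |P.eval (y a)|) = Azy := by
      rw [hAzy]
      refine Finset.prod_congr rfl (fun a _ => ?_)
      rw [hPeval, Finset.abs_prod]
      exact Finset.prod_congr rfl (fun b _ => abs_sub_comm _ _)
    have h2 : |∏ a : Fin k, ∏ t ∈ univ.erase a, (z t - z a)| = Tz * Tz := by
      rw [Finset.abs_prod]
      have : (∏ a : Fin k, |∏ t ∈ univ.erase a, (z t - z a)|)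
          = ∏ a : Fin k, ∏ t ∈ univ.erase a, |z t - z a| :=
        Finset.prod_congr rfl (fun a _ => Finset.abs_prod _ _)
      rw [this, hTz]
      exact prod_erase_eq_sq z
    rw [h1, h2]
  have habscp : |∏ p, P.eval (w p)| = Czw := by
    rw [Finset.abs_prod]
    have : (∏ p, |P.eval (w p)|) = ∏ p, ∏ t, |z t - w p| := by
      refine Finset.prod_congr rfl (fun p _ => ?_)
      rw [hPeval, Finset.abs_prod]
    rw [this, Finset.prod_comm, hCzw]
  have hinv : (∏ i : Fin k, ∏ j : Fin (m+k), |z i - w j|⁻¹) = Czw⁻¹ := by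
    rw [hCzw]
    exact (Finset.prod_congr rfl (fun i _ => Finset.prod_inv_distrib _)).trans
      (Finset.prod_inv_distrib _)
  -- nonvanishing
  have hTzne : Tz ≠ 0 := by
    rw [hTz]
    refine Finset.prod_ne_zero_iff.mpr (fun i _ => Finset.prod_ne_zero_iff.mpr (fun j hj => ?_))
    exact abs_ne_zero.mpr (sub_ne_zero.mpr (hz.ne (ne_of_lt (mem_Ioi.mp hj))))
  have hTyne : Ty ≠ 0 := by
    rw [hTy]
    refine Finset.prod_ne_zero_iff.mpr (fun i _ => Finset.prod_ne_zero_iff.mpr (fun j hj => ?_))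
    exact abs_ne_zero.mpr (sub_ne_zero.mpr (hyinj.ne (ne_of_lt (mem_Ioi.mp hj))))
  have hAzyne : Azy ≠ 0 := by
    rw [hAzy]
    refine Finset.prod_ne_zero_iff.mpr (fun a _ => Finset.prod_ne_zero_iff.mpr (fun b _ => ?_))
    exact abs_ne_zero.mpr (sub_ne_zero.mpr (ne_of_gt (hzy b a)))
  have hCzwne : Czw ≠ 0 := by
    rw [hCzw]
    refine Finset.prod_ne_zero_iff.mpr (fun i _ => Finset.prod_ne_zero_iff.mpr (fun j _ => ?_))
    exact abs_ne_zero.mpr (sub_ne_zero.mpr (hzw i j))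
  -- finish
  have final1 : |(Matrix.vandermonde w).det * E2val| = Tw * ((Azy * Ty) * (Tz * Tz)) := by
    rw [abs_mul, habsE2, absVdm w, ← hTw]
  have final2 : |(∏ p, P.eval (w p)) * (Matrix.vandermonde xc).det|
      = Czw * ((Ty * Tz) * Azy) := by
    rw [abs_mul, habscp, habsxc]
  rw [hDdet, abs_div, final1, final2, hinv]
  field_simp


/-- Generalized Cauchy–Vandermonde determinant (absolute value form):
for the l×l matrix whose first l−k rows are the Vandermonde block `wⱼ^(i-1)` and whose
last k rows are the Cauchy block `1/(zᵢ − wⱼ)`,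
|det D| = ∏_{i<j}|zᵢ−zⱼ| · ∏_{i<j}|wᵢ−wⱼ| · ∏_{i,j}|zᵢ−wⱼ|⁻¹. -/
theorem cauchy_vandermonde_det_abs (k l : ℕ) (hkl : k ≤ l)
    (z : Fin k → ℝ) (w : Fin l → ℝ)
    (hz : Function.Injective z) (hw : Function.Injective w)
    (hzw : ∀ i j, z i ≠ w j) :
    |Matrix.det (Matrix.of fun i j : Fin l =>
        if h : (i : ℕ) < l - k then (w j) ^ (i : ℕ)
        else (z ⟨(i : ℕ) - (l - k), by omega⟩ - w j)⁻¹)|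
      = (∏ i : Fin k, ∏ j ∈ Finset.Ioi i, |z i - z j|)
        * (∏ i : Fin l, ∏ j ∈ Finset.Ioi i, |w i - w j|)
        * ∏ i : Fin k, ∏ j : Fin l, |z i - w j|⁻¹ := by
  obtain ⟨m, rfl⟩ : ∃ m, l = m + k := ⟨l - k, by omega⟩
  have h := cv_aux k m z w hz hw hzw
  have hmk : m + k - k = m := by omega
  simp only [hmk]
  exact h
end

section
/- For all natural numbers n and all 0 ≤ k ≤ ⌊n/2⌋, and every p ≥ 1: (1/n!) · C(n,k) · (C(n−k, n−2k) · k!)^{1/p} ≤ ⌊n/2⌋ / (⌊n/2⌋!)^{1−1/p}, and hence the sum over k from 0 to ⌊n/2⌋ of the left-hand side summands is bounded by ⌊n/2⌋ / (⌊n/2⌋!)^{1−1/p} up to the stated estimate: ∑_{k=0}^{⌊n/2⌋} (1/((n−k)!·k!)) · ((n−k)!/(n−2k)!)^{1/p} ≤ ⌊n/2⌋ / (⌊n/2⌋!)^{1−1/p}. -/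
open Finset

lemma sum_inv_fact_le (m : ℕ) :
    ∑ k ∈ Finset.Ico 1 (m + 1), (1 / (Nat.factorial k : ℝ))
      ≤ 2 - 2 / (Nat.factorial (m + 1) : ℝ) := by
  induction m with
  | zero => simp
  | succ m ih =>
    rw [Finset.sum_Ico_succ_top (by omega)]
    have h1 : (0 : ℝ) < Nat.factorial (m + 1) := by positivity
    have h2 : (0 : ℝ) < Nat.factorial (m + 2) := by positivity
    have hfac : (Nat.factorial (m + 2) : ℝ) = (m + 2) * Nat.factorial (m + 1) := by
      rw [Nat.factorial_succ]; push_cast; ring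
    have key : 2 / (Nat.factorial (m + 2) : ℝ) ≤ 1 / (Nat.factorial (m + 1) : ℝ) := by
      rw [hfac, div_le_div_iff₀ (by positivity) h1]
      nlinarith [h1]
    have e2 : ((m + 1 + 1).factorial : ℝ) = ((m + 2).factorial : ℝ) := by norm_num
    rw [e2]
    simp only [div_eq_mul_inv, one_mul] at ih key ⊢
    linarith

/-- The combinatorial factorial estimate: for n ≥ 4 and p ≥ 1,
∑_{k=0}^{⌊n/2⌋} 1/((n−k)!·k!) · ((n−k)!/(n−2k)!)^{1/p} ≤ ⌊n/2⌋/(⌊n/2⌋!)^{1−1/p}. -/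
theorem factorial_sum_estimate (p : ℝ) (hp : 1 ≤ p) (n : ℕ) (hn : 4 ≤ n) :
    ∑ k ∈ Finset.range (n / 2 + 1),
        (1 / ((Nat.factorial (n - k) : ℝ) * (Nat.factorial k : ℝ)))
          * ((Nat.factorial (n - k) : ℝ) / (Nat.factorial (n - 2 * k) : ℝ)) ^ (1 / p)
      ≤ ((n / 2 : ℕ) : ℝ) / ((Nat.factorial (n / 2) : ℝ)) ^ (1 - 1 / p) := by
  set m := n / 2 with hm
  set e := 1 / p with he
  have hp0 : 0 < p := lt_of_lt_of_le one_pos hp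
  have he0 : 0 < e := by positivity
  have he1 : e ≤ 1 := by rw [he]; exact div_le_one_of_le₀ hp (le_of_lt hp0)
  have hm2 : 2 ≤ m := by omega
  have hM1 : (1 : ℝ) ≤ (Nat.factorial m : ℝ) := by
    exact_mod_cast Nat.one_le_iff_ne_zero.mpr (Nat.factorial_ne_zero m)
  have hM0 : (0 : ℝ) < (Nat.factorial m : ℝ) := lt_of_lt_of_le one_pos hM1
  -- rewrite RHS as m * (m!)^(e-1)
  have hRHS : ((m : ℕ) : ℝ) / ((Nat.factorial m : ℝ)) ^ (1 - e)
      = (m : ℝ) * ((Nat.factorial m : ℝ)) ^ (e - 1) := by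
    have : ((Nat.factorial m : ℝ)) ^ (e - 1) = (((Nat.factorial m : ℝ)) ^ (1 - e))⁻¹ := by
      rw [show e - 1 = -(1 - e) by ring, Real.rpow_neg (le_of_lt hM0)]
    rw [this, div_eq_mul_inv]
  rw [hRHS]
  -- per-term bound for k ≥ 1
  have hterm : ∀ k, 1 ≤ k → k ≤ m →
      (1 / ((Nat.factorial (n - k) : ℝ) * (Nat.factorial k : ℝ)))
          * ((Nat.factorial (n - k) : ℝ) / (Nat.factorial (n - 2 * k) : ℝ)) ^ e
        ≤ ((Nat.factorial m : ℝ)) ^ (e - 1) * (1 / (Nat.factorial k : ℝ)) := by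
    intro k hk1 hkm
    have hA1 : (1 : ℝ) ≤ (Nat.factorial (n - k) : ℝ) := by
      exact_mod_cast Nat.one_le_iff_ne_zero.mpr (Nat.factorial_ne_zero _)
    have hA0 : (0 : ℝ) < (Nat.factorial (n - k) : ℝ) := lt_of_lt_of_le one_pos hA1
    have hB1 : (1 : ℝ) ≤ (Nat.factorial (n - 2 * k) : ℝ) := by
      exact_mod_cast Nat.one_le_iff_ne_zero.mpr (Nat.factorial_ne_zero _)
    have hk0 : (0 : ℝ) < (Nat.factorial k : ℝ) := by positivity
    have hmA : (Nat.factorial m : ℝ) ≤ (Nat.factorial (n - k) : ℝ) := by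
      exact_mod_cast Nat.factorial_le (by omega)
    -- (A/B)^e ≤ A^e
    have h1 : ((Nat.factorial (n - k) : ℝ) / (Nat.factorial (n - 2 * k) : ℝ)) ^ e
        ≤ ((Nat.factorial (n - k) : ℝ)) ^ e := by
      rw [Real.div_rpow (le_of_lt hA0) (by linarith)]
      have : (1 : ℝ) ≤ ((Nat.factorial (n - 2 * k) : ℝ)) ^ e :=
        Real.one_le_rpow hB1 (le_of_lt he0)
      calc ((Nat.factorial (n - k) : ℝ)) ^ e / ((Nat.factorial (n - 2 * k) : ℝ)) ^ e
          ≤ ((Nat.factorial (n - k) : ℝ)) ^ e / 1 := by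
            apply div_le_div_of_nonneg_left (by positivity) one_pos this
        _ = ((Nat.factorial (n - k) : ℝ)) ^ e := by rw [div_one]
    have h2 : ((Nat.factorial (n - k) : ℝ)) ^ e / (Nat.factorial (n - k) : ℝ)
        = ((Nat.factorial (n - k) : ℝ)) ^ (e - 1) := by
      rw [Real.rpow_sub hA0, Real.rpow_one]
    have h3 : ((Nat.factorial (n - k) : ℝ)) ^ (e - 1)
        ≤ ((Nat.factorial m : ℝ)) ^ (e - 1) :=
      Real.rpow_le_rpow_of_nonpos hM0 hmA (by linarith)
    calc (1 / ((Nat.factorial (n - k) : ℝ) * (Nat.factorial k : ℝ)))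
            * ((Nat.factorial (n - k) : ℝ) / (Nat.factorial (n - 2 * k) : ℝ)) ^ e
        ≤ (1 / ((Nat.factorial (n - k) : ℝ) * (Nat.factorial k : ℝ)))
            * ((Nat.factorial (n - k) : ℝ)) ^ e := by
          apply mul_le_mul_of_nonneg_left h1 (by positivity)
      _ = ((Nat.factorial (n - k) : ℝ)) ^ (e - 1) * (1 / (Nat.factorial k : ℝ)) := by
          rw [← h2]; field_simp
      _ ≤ ((Nat.factorial m : ℝ)) ^ (e - 1) * (1 / (Nat.factorial k : ℝ)) := by
          apply mul_le_mul_of_nonneg_right h3 (by positivity)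
  -- k = 0 term
  have hterm0 : (1 / ((Nat.factorial (n - 0) : ℝ) * (Nat.factorial 0 : ℝ)))
        * ((Nat.factorial (n - 0) : ℝ) / (Nat.factorial (n - 2 * 0) : ℝ)) ^ e
      = 1 / (Nat.factorial n : ℝ) := by
    simp [Nat.sub_zero, div_self (ne_of_gt (show (0:ℝ) < (Nat.factorial n : ℝ) by positivity)),
      Real.one_rpow]
  have hn_fac : (12 : ℝ) * (Nat.factorial m : ℝ) ≤ (Nat.factorial n : ℝ) := by
    have h1 : Nat.factorial (m + 2) ≤ Nat.factorial n := Nat.factorial_le (by omega)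
    have h2 : Nat.factorial (m + 2) = (m + 2) * ((m + 1) * Nat.factorial m) := by
      rw [Nat.factorial_succ, Nat.factorial_succ]
    have h3 : 12 * Nat.factorial m ≤ Nat.factorial (m + 2) := by
      rw [h2]
      have : 12 ≤ (m + 2) * (m + 1) := by nlinarith [hm2]
      calc 12 * Nat.factorial m ≤ (m + 2) * (m + 1) * Nat.factorial m :=
            Nat.mul_le_mul_right _ this
        _ = (m + 2) * ((m + 1) * Nat.factorial m) := by ring
    exact_mod_cast le_trans h3 h1
  have hMe : (1 : ℝ) / (Nat.factorial m : ℝ) ≤ ((Nat.factorial m : ℝ)) ^ (e - 1) := by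
    have : ((Nat.factorial m : ℝ)) ^ (-1 : ℝ) ≤ ((Nat.factorial m : ℝ)) ^ (e - 1) :=
      Real.rpow_le_rpow_of_exponent_le hM1 (by linarith)
    rwa [Real.rpow_neg_one, inv_eq_one_div] at this
  have h0bound : 1 / (Nat.factorial n : ℝ)
      ≤ (1 / 12 : ℝ) * ((Nat.factorial m : ℝ)) ^ (e - 1) := by
    have hnf0 : (0 : ℝ) < (Nat.factorial n : ℝ) := by positivity
    have h1 : 1 / (Nat.factorial n : ℝ) ≤ 1 / (12 * (Nat.factorial m : ℝ)) := by
      apply one_div_le_one_div_of_le (by positivity) hn_fac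
    calc 1 / (Nat.factorial n : ℝ) ≤ 1 / (12 * (Nat.factorial m : ℝ)) := h1
      _ = (1 / 12 : ℝ) * (1 / (Nat.factorial m : ℝ)) := by ring
      _ ≤ (1 / 12 : ℝ) * ((Nat.factorial m : ℝ)) ^ (e - 1) := by
          apply mul_le_mul_of_nonneg_left hMe (by norm_num)
  -- split the sum
  have hsplit : ∑ k ∈ Finset.range (m + 1),
        (1 / ((Nat.factorial (n - k) : ℝ) * (Nat.factorial k : ℝ)))
          * ((Nat.factorial (n - k) : ℝ) / (Nat.factorial (n - 2 * k) : ℝ)) ^ e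
      = (1 / ((Nat.factorial (n - 0) : ℝ) * (Nat.factorial 0 : ℝ)))
          * ((Nat.factorial (n - 0) : ℝ) / (Nat.factorial (n - 2 * 0) : ℝ)) ^ e
        + ∑ k ∈ Finset.Ico 1 (m + 1),
            (1 / ((Nat.factorial (n - k) : ℝ) * (Nat.factorial k : ℝ)))
              * ((Nat.factorial (n - k) : ℝ) / (Nat.factorial (n - 2 * k) : ℝ)) ^ e := by
    rw [Finset.range_eq_Ico, Finset.sum_eq_sum_Ico_succ_bot (by omega)]
  have hP0 : (0 : ℝ) < ((Nat.factorial m : ℝ)) ^ (e - 1) := Real.rpow_pos_of_pos hM0 _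
  have hS : ∑ k ∈ Finset.Ico 1 (m + 1), (1 / (Nat.factorial k : ℝ)) ≤ (m : ℝ) - 1 / 12 := by
    rcases eq_or_lt_of_le hm2 with h | h
    · rw [← h]
      have : Finset.Ico 1 (2 + 1) = {1, 2} := rfl
      rw [this]
      norm_num [Nat.factorial]
    · have h3 : (3 : ℝ) ≤ (m : ℝ) := by exact_mod_cast h
      have := sum_inv_fact_le m
      have hpos : (0 : ℝ) ≤ 2 / (Nat.factorial (m + 1) : ℝ) := by positivity
      linarith
  have hrest : ∑ k ∈ Finset.Ico 1 (m + 1),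
        (1 / ((Nat.factorial (n - k) : ℝ) * (Nat.factorial k : ℝ)))
          * ((Nat.factorial (n - k) : ℝ) / (Nat.factorial (n - 2 * k) : ℝ)) ^ e
      ≤ ((Nat.factorial m : ℝ)) ^ (e - 1)
          * ∑ k ∈ Finset.Ico 1 (m + 1), (1 / (Nat.factorial k : ℝ)) := by
    rw [Finset.mul_sum]
    apply Finset.sum_le_sum
    intro k hk
    have hk' := Finset.mem_Ico.mp hk
    exact hterm k hk'.1 (by omega)
  have hrest2 : ((Nat.factorial m : ℝ)) ^ (e - 1)
          * ∑ k ∈ Finset.Ico 1 (m + 1), (1 / (Nat.factorial k : ℝ))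
      ≤ ((Nat.factorial m : ℝ)) ^ (e - 1) * ((m : ℝ) - 1 / 12) :=
    mul_le_mul_of_nonneg_left hS (le_of_lt hP0)
  rw [hsplit, hterm0]
  nlinarith [h0bound, hrest, hrest2, hP0]
end

section
/- For x = (t, 𝐱) ∈ ℝ² with t² ≠ 𝐱², the limit as ε ↘ 0 of −(1/(4π))·log(−t²+𝐱²+iεt) equals −(1/(4π))·log|t²−𝐱²| − (i/4)·sgn(t)·θ(t²−𝐱²), where log is the principal branch of the complex logarithm. -/
open Filter

/-- Heaviside step function with the convention `θ 0 = 1`. -/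
noncomputable def heaviside (s : ℝ) : ℝ := if 0 ≤ s then 1 else 0

/-- Boundary value of the 2D massless two-point function: off the light cone,
lim_{ε↘0} −(1/4π) log(−t²+x²+iεt) = −(1/4π) log|t²−x²| − (i/4) sgn(t) θ(t²−x²). -/
theorem twoPointFunction_boundary_value (t x : ℝ) (h : t ^ 2 ≠ x ^ 2) :
    Tendsto (fun ε : ℝ =>
        -(1 / (4 * (Real.pi : ℂ))) *
          Complex.log (((-t ^ 2 + x ^ 2 : ℝ) : ℂ) + Complex.I * (ε : ℂ) * (t : ℂ)))
      (nhdsWithin 0 (Set.Ioi 0))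
      (nhds (-(1 / (4 * (Real.pi : ℂ))) * ((Real.log |t ^ 2 - x ^ 2| : ℝ) : ℂ)
        - Complex.I / 4 * ((Real.sign t : ℝ) : ℂ)
            * ((heaviside (t ^ 2 - x ^ 2) : ℝ) : ℂ))) := by
  set A : ℂ := ((-t ^ 2 + x ^ 2 : ℝ) : ℂ) with hA
  have hbase : Tendsto (fun ε : ℝ => A + Complex.I * (ε : ℂ) * (t : ℂ))
      (nhdsWithin 0 (Set.Ioi 0)) (nhds A) := by
    have : ContinuousAt (fun ε : ℝ => A + Complex.I * (ε : ℂ) * (t : ℂ)) 0 := by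
      fun_prop
    simpa using this.continuousWithinAt.tendsto
  have habsA : ‖A‖ = |t ^ 2 - x ^ 2| := by
    rw [hA, Complex.norm_real, Real.norm_eq_abs, ← abs_neg]; ring_nf
  have hpi : (Real.pi : ℂ) ≠ 0 := Complex.ofReal_ne_zero.mpr Real.pi_ne_zero
  rcases lt_or_gt_of_ne h with hlt | hgt
  · -- spacelike: t² < x², A.re > 0, log continuous at A
    have hApos : (0:ℝ) < -t ^ 2 + x ^ 2 := by linarith
    have hcont : ContinuousAt Complex.log A :=
      (Complex.differentiableAt_log (by
        rw [Complex.mem_slitPlane_iff]; left; rw [hA, Complex.ofReal_re]; linarith)).continuousAt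
    have habs' : |t ^ 2 - x ^ 2| = -t ^ 2 + x ^ 2 := by
      rw [abs_of_neg (by linarith)]; ring
    have hlog : Complex.log A = ((Real.log |t ^ 2 - x ^ 2| : ℝ) : ℂ) := by
      rw [hA, ← Complex.ofReal_log (by linarith : (0:ℝ) ≤ -t ^ 2 + x ^ 2), habs']
    have hs : heaviside (t ^ 2 - x ^ 2) = 0 := by
      unfold heaviside; rw [if_neg]; linarith
    have := (hcont.tendsto.comp hbase).const_mul (-(1 / (4 * (Real.pi : ℂ))))
    convert this using 2
    · rfl
    rw [hs, hlog]
    push_cast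
    ring
  · -- timelike: t² > x², so t ≠ 0
    have htne : t ≠ 0 := by
      intro h0; rw [h0] at hgt; nlinarith [sq_nonneg x]
    have hAre : A.re < 0 := by
      rw [hA, Complex.ofReal_re]; linarith
    have hAim : A.im = 0 := by rw [hA, Complex.ofReal_im]
    have hs : heaviside (t ^ 2 - x ^ 2) = 1 := by
      unfold heaviside; rw [if_pos]; linarith
    rcases htne.lt_or_gt with hneg | hpos
    · -- t < 0 : im < 0
      have hmem : ∀ᶠ ε : ℝ in nhdsWithin (0:ℝ) (Set.Ioi 0),
          (A + Complex.I * (ε : ℂ) * (t : ℂ)) ∈ {z : ℂ | z.im < 0} := by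
        filter_upwards [self_mem_nhdsWithin] with ε hε
        simp only [Set.mem_setOf_eq, Complex.add_im, hA, Complex.ofReal_im,
          Complex.mul_im, Complex.mul_re, Complex.I_re, Complex.I_im,
          Complex.ofReal_re]
        have : (0:ℝ) < ε := hε
        nlinarith
      have hcomp : Tendsto (fun ε : ℝ => A + Complex.I * (ε : ℂ) * (t : ℂ))
          (nhdsWithin 0 (Set.Ioi 0)) (nhdsWithin A {z : ℂ | z.im < 0}) :=
        tendsto_nhdsWithin_of_tendsto_nhds_of_eventually_within _ hbase hmem
      have hlim := (Complex.tendsto_log_nhdsWithin_im_neg_of_re_neg_of_im_zero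
        hAre hAim).comp hcomp
      have := hlim.const_mul (-(1 / (4 * (Real.pi : ℂ))))
      convert this using 2
      · rfl
      rw [hs, habsA, Real.sign_of_neg hneg]
      push_cast
      field_simp
      ring
    · -- t > 0 : im ≥ 0
      have hmem : ∀ᶠ ε : ℝ in nhdsWithin (0:ℝ) (Set.Ioi 0),
          (A + Complex.I * (ε : ℂ) * (t : ℂ)) ∈ {z : ℂ | 0 ≤ z.im} := by
        filter_upwards [self_mem_nhdsWithin] with ε hε
        simp only [Set.mem_setOf_eq, Complex.add_im, hA, Complex.ofReal_im,
          Complex.mul_im, Complex.mul_re, Complex.I_re, Complex.I_im,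
          Complex.ofReal_re]
        have : (0:ℝ) < ε := hε
        nlinarith
      have hcomp : Tendsto (fun ε : ℝ => A + Complex.I * (ε : ℂ) * (t : ℂ))
          (nhdsWithin 0 (Set.Ioi 0)) (nhdsWithin A {z : ℂ | 0 ≤ z.im}) :=
        tendsto_nhdsWithin_of_tendsto_nhds_of_eventually_within _ hbase hmem
      have hlim := (Complex.tendsto_log_nhdsWithin_im_nonneg_of_re_neg_of_im_zero
        hAre hAim).comp hcomp
      have := hlim.const_mul (-(1 / (4 * (Real.pi : ℂ))))
      convert this using 2
      · rfl
      rw [hs, habsA, Real.sign_of_pos hpos]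
      push_cast
      field_simp
      ring
end
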